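/- Let A and B be unital C*-algebras, T₀ : A → B a surjective real-linear isometry which is *-preserving, and P a central projection in B commuting with the image of T₀, such that the map T₀'(a) = P·T₀(a) + (1_B − P)·T₀(a)* is complex-linear. Then T₀' is a surjective complex-linear isometry from A onto B. -/

import Mathlib

private lemma aux_real_pow {x y : ℝ} (hx : 0 ≤ x) (hy : 0 ≤ y)
    (h : ∀ n : ℕ, x ^ (2 ^ n) ≤ 2 * y ^ (2 ^ n)) : x ≤ y := by
  by_contra hlt
  push_neg at hlt
  have hy0 : 0 < x := lt_of_le_of_lt hy hlt
  rcases eq_or_lt_of_le hy with hy' | hy'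
  · have := h 0
    simp [← hy'] at this
    nlinarith
  · have hr : 1 < x / y := (one_lt_div hy').mpr hlt
    obtain ⟨n, hn⟩ := pow_unbounded_of_one_lt (2 : ℝ) hr
    have h2 : (x / y) ^ n ≤ (x / y) ^ (2 ^ n) :=
      pow_le_pow_right₀ hr.le (Nat.lt_two_pow_self (n := n)).le
    have h3 : (x / y) ^ (2 ^ n) ≤ 2 := by
      have hypos : (0:ℝ) < y ^ (2 ^ n) := pow_pos hy' _
      rw [div_pow, div_le_iff₀ hypos]
      linarith [h n]
    linarith

private lemma aux_S_norm_le {B : Type*}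
    [NormedRing B] [StarRing B] [CStarRing B]
    (P : B) (hP : P * P = P) (hPsa : star P = P)
    (hPc : ∀ b : B, P * b = b * P) (b : B) :
    ‖P * b + (1 - P) * star b‖ ≤ ‖b‖ := by
  set Q : B := 1 - P with hQdef
  have hQ : Q * Q = Q := by
    simp only [hQdef, mul_sub, sub_mul, one_mul, mul_one, hP]; abel
  have hPQ : P * Q = 0 := by
    simp only [hQdef, mul_sub, mul_one, hP, sub_self]
  have hQP : Q * P = 0 := by
    simp only [hQdef, sub_mul, one_mul, hP, sub_self]
  have hQsa : star Q = Q := by simp [hQdef, hPsa]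
  have hQc : ∀ c : B, Q * c = c * Q := by
    intro c; simp only [hQdef, sub_mul, mul_sub, one_mul, mul_one, hPc c]
  set u : B := P * b + Q * star b with hu
  -- norm of P and Q at most 1
  have normProj : ∀ p : B, p * p = p → star p = p → ‖p‖ ≤ 1 := by
    intro p hpp hpsa
    have h1 : ‖p‖ * ‖p‖ = ‖p‖ := by
      rw [← CStarRing.norm_star_mul_self, hpsa, hpp]
    nlinarith [norm_nonneg p]
  have hPn : ‖P‖ ≤ 1 := normProj P hP hPsa
  have hQn : ‖Q‖ ≤ 1 := normProj Q hQ hQsa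
  -- v = star u * u
  set x : B := star b * b with hx
  set y : B := b * star b with hy
  have hxc : ∀ c : B, P * c = c * P := hPc
  have hustar : star u = star b * P + b * Q := by
    simp [hu, star_add, star_mul, hPsa, hQsa]
  have hv : star u * u = P * x + Q * y := by
    rw [hustar, hu]
    have e1 : (star b * P) * (P * b) = P * x := by
      rw [hx, mul_assoc, ← mul_assoc P P b, hP, ← mul_assoc, ← hPc, mul_assoc]
    have e2 : (star b * P) * (Q * star b) = 0 := by
      rw [mul_assoc, ← mul_assoc P Q, hPQ, zero_mul, mul_zero]
    have e3 : (b * Q) * (P * b) = 0 := by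
      rw [mul_assoc, ← mul_assoc Q P, hQP, zero_mul, mul_zero]
    have e4 : (b * Q) * (Q * star b) = Q * y := by
      rw [hy, mul_assoc, ← mul_assoc Q Q, hQ, ← mul_assoc, ← hQc, mul_assoc]
    rw [add_mul, mul_add, mul_add, e1, e2, e3, e4, add_zero, zero_add]
  -- powers
  have hpow : ∀ n : ℕ, (P * x + Q * y) ^ (2 ^ n) = P * x ^ (2 ^ n) + Q * y ^ (2 ^ n) := by
    intro n
    have key : ∀ m : ℕ, 0 < m → (P * x + Q * y) ^ m = P * x ^ m + Q * y ^ m := by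
      intro m hm
      induction m with
      | zero => omega
      | succ k ih =>
        rcases Nat.eq_zero_or_pos k with hk | hk
        · subst hk; simp
        · rw [pow_succ, ih hk]
          have c1 : P * x ^ k * (P * x) = P * x ^ (k + 1) := by
            rw [mul_assoc P (x ^ k), ← mul_assoc (x ^ k) P x, ← hPc (x ^ k),
              mul_assoc P (x ^ k) x, ← mul_assoc P P, hP, ← pow_succ]
          have c2 : P * x ^ k * (Q * y) = 0 := by
            rw [mul_assoc P (x ^ k), ← mul_assoc (x ^ k) Q, ← hQc (x ^ k),
              mul_assoc Q (x ^ k) y, ← mul_assoc P Q, hPQ, zero_mul]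
          have c3 : Q * y ^ k * (Q * y) = Q * y ^ (k + 1) := by
            rw [mul_assoc Q (y ^ k), ← mul_assoc (y ^ k) Q y, ← hQc (y ^ k),
              mul_assoc Q (y ^ k) y, ← mul_assoc Q Q, hQ, ← pow_succ]
          have c4 : Q * y ^ k * (P * x) = 0 := by
            rw [mul_assoc Q (y ^ k), ← mul_assoc (y ^ k) P, ← hPc (y ^ k),
              mul_assoc P (y ^ k) x, ← mul_assoc Q P, hQP, zero_mul]
          rw [add_mul, mul_add, mul_add, c1, c2, c3, c4, add_zero, zero_add]
    exact key _ (Nat.pow_pos (n := n) (by norm_num))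
  -- selfadjointness
  have hxsa : IsSelfAdjoint x := by
    rw [IsSelfAdjoint, hx, star_mul, star_star]
  have hysa : IsSelfAdjoint y := by
    rw [IsSelfAdjoint, hy, star_mul, star_star]
  have hvsa : IsSelfAdjoint (P * x + Q * y) := by
    rw [← hv]; exact IsSelfAdjoint.star_mul_self u
  have hxn : ‖x‖ = ‖b‖ * ‖b‖ := by rw [hx, CStarRing.norm_star_mul_self]
  have hyn : ‖y‖ = ‖b‖ * ‖b‖ := by rw [hy, CStarRing.norm_self_mul_star]
  -- norm bound on v
  have hvle : ‖P * x + Q * y‖ ≤ ‖b‖ * ‖b‖ := by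
    apply aux_real_pow (norm_nonneg _) (by positivity)
    intro n
    have h1 : ‖(P * x + Q * y) ^ (2 ^ n)‖ = ‖P * x + Q * y‖ ^ (2 ^ n) := by
      have := hvsa.nnnorm_pow_two_pow n
      calc ‖(P * x + Q * y) ^ (2 ^ n)‖ = ((‖(P * x + Q * y) ^ (2 ^ n)‖₊ : ℝ)) := rfl
        _ = ((‖(P * x + Q * y)‖₊ ^ (2 ^ n) : NNReal) : ℝ) := by rw [this]
        _ = ‖P * x + Q * y‖ ^ (2 ^ n) := by push_cast; rfl
    have hxp : ‖x ^ (2 ^ n)‖ = ‖x‖ ^ (2 ^ n) := by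
      have := hxsa.nnnorm_pow_two_pow n
      calc ‖x ^ (2 ^ n)‖ = ((‖x ^ (2 ^ n)‖₊ : ℝ)) := rfl
        _ = ((‖x‖₊ ^ (2 ^ n) : NNReal) : ℝ) := by rw [this]
        _ = ‖x‖ ^ (2 ^ n) := by push_cast; rfl
    have hyp : ‖y ^ (2 ^ n)‖ = ‖y‖ ^ (2 ^ n) := by
      have := hysa.nnnorm_pow_two_pow n
      calc ‖y ^ (2 ^ n)‖ = ((‖y ^ (2 ^ n)‖₊ : ℝ)) := rfl
        _ = ((‖y‖₊ ^ (2 ^ n) : NNReal) : ℝ) := by rw [this]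
        _ = ‖y‖ ^ (2 ^ n) := by push_cast; rfl
    rw [← h1, hpow n]
    calc ‖P * x ^ (2 ^ n) + Q * y ^ (2 ^ n)‖
        ≤ ‖P * x ^ (2 ^ n)‖ + ‖Q * y ^ (2 ^ n)‖ := norm_add_le _ _
      _ ≤ ‖x ^ (2 ^ n)‖ + ‖y ^ (2 ^ n)‖ := add_le_add
          ((norm_mul_le _ _).trans (mul_le_of_le_one_left (norm_nonneg _) hPn))
          ((norm_mul_le _ _).trans (mul_le_of_le_one_left (norm_nonneg _) hQn))
      _ = ‖x‖ ^ 2 ^ n + ‖y‖ ^ 2 ^ n := by rw [hxp, hyp]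
      _ = 2 * (‖b‖ * ‖b‖) ^ 2 ^ n := by rw [hxn, hyn]; ring
  have husq : ‖u‖ * ‖u‖ ≤ ‖b‖ * ‖b‖ := by
    rw [← CStarRing.norm_star_mul_self, hv]; exact hvle
  nlinarith [norm_nonneg u, norm_nonneg b]

theorem stmtN
    {A B : Type*}
    [NormedRing A] [StarRing A] [CStarRing A] [NormedAlgebra ℂ A]
    [CompleteSpace A] [StarModule ℂ A]
    [NormedRing B] [StarRing B] [CStarRing B] [NormedAlgebra ℂ B]
    [CompleteSpace B] [StarModule ℂ B]
    (T₀ : A →ₗ[ℝ] B)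
    (hsurj : Function.Surjective T₀)
    (hiso : Isometry T₀)
    (hstar : ∀ x : A, T₀ (star x) = star (T₀ x))
    (P : B) (hP : P * P = P) (hPsa : star P = P)
    (hPc : ∀ b : B, P * b = b * P)
    (T₀' : A → B)
    (hdef : ∀ a : A, T₀' a = P * T₀ a + (1 - P) * star (T₀ a))
    (hC : ∀ (z : ℂ) (a : A), T₀' (z • a) = z • T₀' a) :
    Function.Surjective T₀' ∧ Isometry T₀' := by
  set S : B → B := fun b => P * b + (1 - P) * star b with hS
  have hSS : ∀ b : B, S (S b) = b := by
    intro b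
    have hPQ : P * (1 - P) = 0 := by
      simp only [mul_sub, mul_one, hP, sub_self]
    have hQP : (1 - P) * P = 0 := by
      simp only [sub_mul, one_mul, hP, sub_self]
    have hQ : (1 - P) * (1 - P) = 1 - P := by
      simp only [mul_sub, sub_mul, one_mul, mul_one, hP]; abel
    have hQc' : ∀ c : B, (1 - P) * c = c * (1 - P) := by
      intro c; simp only [sub_mul, mul_sub, one_mul, mul_one, hPc c]
    have hstarSb : star (S b) = star b * P + b * (1 - P) := by
      simp only [hS, star_add, star_mul, hPsa, star_sub, star_one, star_star]
    simp only [hS]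
    rw [hstarSb]
    have t1 : P * (P * b) = P * b := by rw [← mul_assoc, hP]
    have t2 : P * ((1 - P) * star b) = 0 := by rw [← mul_assoc, hPQ, zero_mul]
    have t3 : (1 - P) * (star b * P) = 0 := by
      rw [← hPc (star b), ← mul_assoc, hQP, zero_mul]
    have t4 : (1 - P) * (b * (1 - P)) = (1 - P) * b := by
      rw [← hQc' b, ← mul_assoc, hQ]
    rw [mul_add, mul_add, t1, t2, t3, t4, add_zero, zero_add, ← add_mul]
    simp
  have hSle : ∀ b : B, ‖S b‖ ≤ ‖b‖ := fun b => aux_S_norm_le P hP hPsa hPc b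
  have hSeq : ∀ b : B, ‖S b‖ = ‖b‖ := by
    intro b
    refine le_antisymm (hSle b) ?_
    calc ‖b‖ = ‖S (S b)‖ := by rw [hSS]
      _ ≤ ‖S b‖ := hSle _
  have hT : ∀ a : A, T₀' a = S (T₀ a) := fun a => hdef a
  have hSsub : ∀ b c : B, S (b - c) = S b - S c := by
    intro b c
    simp only [hS, star_sub, mul_sub]
    abel
  constructor
  · intro b
    obtain ⟨a, ha⟩ := hsurj (S b)
    exact ⟨a, by rw [hT, ha, hSS]⟩
  · apply Isometry.of_dist_eq
    intro a₁ a₂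
    rw [dist_eq_norm, hT, hT, ← hSsub, hSeq, ← dist_eq_norm]
    exact hiso.dist_eq a₁ a₂
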